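/- Let P be a proper ideal of a commutative ring R with identity and I an ideal of R. Then the following are equivalent: (1) P is an I-prime ideal; (2) for every r ∈ R \ P, the colon ideal (P : r) equals the set-theoretic union P ∪ (I·P : r); (3) for every r ∈ R \ P, (P : r) = P or (P : r) = (I·P : r). Here (J : r) = {s ∈ R : rs ∈ J}. -/

import Mathlib

/-- A proper ideal `P` of a commutative ring `R` is `I`-prime if whenever
`a * b ∈ P \ I*P`, then `a ∈ P` or `b ∈ P`. -/
def IsIPrime {R : Type*} [CommRing R] (I P : Ideal R) : Prop :=
  P ≠ ⊤ ∧ ∀ a b : R, a * b ∈ P → a * b ∉ I * P → a ∈ P ∨ b ∈ P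

/-- A proper ideal `Q` is weakly prime if whenever `a * b ∈ Q \ {0}`,
then `a ∈ Q` or `b ∈ Q`. -/
def IsWeaklyPrime {R : Type*} [CommRing R] (Q : Ideal R) : Prop :=
  Q ≠ ⊤ ∧ ∀ a b : R, a * b ∈ Q → a * b ≠ 0 → a ∈ Q ∨ b ∈ Q

theorem stmt_11 {R : Type*} [CommRing R] (I P : Ideal R) (hP : P ≠ ⊤) :
    List.TFAE
      [IsIPrime I P,
       ∀ r : R, r ∉ P →
         {s : R | r * s ∈ P} = (P : Set R) ∪ {s : R | r * s ∈ I * P},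
       ∀ r : R, r ∉ P →
         {s : R | r * s ∈ P} = (P : Set R) ∨
           {s : R | r * s ∈ P} = {s : R | r * s ∈ I * P}] := by
  have hIP : I * P ≤ P := Ideal.mul_le_right
  tfae_have 1 → 2 := by
    rintro ⟨-, h⟩ r hr
    ext s
    simp only [Set.mem_setOf_eq, Set.mem_union, SetLike.mem_coe]
    constructor
    · intro hs
      by_cases hip : r * s ∈ I * P
      · exact Or.inr hip
      · rcases h r s hs hip with h' | h'
        · exact absurd h' hr
        · exact Or.inl h'
    · rintro (hs | hs)
      · exact Ideal.mul_mem_left _ _ hs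
      · exact hIP hs
  tfae_have 2 → 3 := by
    intro h r hr
    have heq := h r hr
    by_contra hcon
    push_neg at hcon
    obtain ⟨h1, h2⟩ := hcon
    -- P ⊆ S and C ⊆ S
    have hPS : (P : Set R) ⊆ {s : R | r * s ∈ P} := by
      rw [heq]; exact Set.subset_union_left
    have hCS : {s : R | r * s ∈ I * P} ⊆ {s : R | r * s ∈ P} := by
      rw [heq]; exact Set.subset_union_right
    obtain ⟨c, hcS, hcP⟩ : ∃ c, c ∈ {s : R | r * s ∈ P} ∧ c ∉ P := by
      by_contra hc
      push_neg at hc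
      exact h1 (Set.Subset.antisymm hc hPS)
    obtain ⟨p, hpS, hpC⟩ : ∃ p, p ∈ {s : R | r * s ∈ P} ∧ p ∉ {s : R | r * s ∈ I * P} := by
      by_contra hc
      push_neg at hc
      exact h2 (Set.Subset.antisymm hc hCS)
    have hpP : p ∈ P := by
      have := heq ▸ hpS
      rcases this with h' | h'
      · exact h'
      · exact absurd h' hpC
    have hcC : c ∈ {s : R | r * s ∈ I * P} := by
      have := heq ▸ hcS
      rcases this with h' | h'
      · exact absurd h' hcP
      · exact h'
    have hsum : p + c ∈ {s : R | r * s ∈ P} := by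
      simp only [Set.mem_setOf_eq, mul_add]
      exact Ideal.add_mem _ hpS hcS
    have := heq ▸ hsum
    rcases this with h' | h'
    · have : c ∈ P := by
        have : (p + c) - p = c := by ring
        rw [← this]
        exact Ideal.sub_mem _ h' hpP
      exact hcP this
    · apply hpC
      simp only [Set.mem_setOf_eq, mul_add] at h' ⊢
      have : r * p = (r * p + r * c) - r * c := by ring
      rw [this]
      exact Ideal.sub_mem _ h' hcC
  tfae_have 3 → 1 := by
    intro h
    refine ⟨hP, fun a b hab hnab => ?_⟩
    by_cases ha : a ∈ P
    · exact Or.inl ha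
    · rcases h a ha with h' | h'
      · refine Or.inr ?_
        have : b ∈ {s : R | a * s ∈ P} := hab
        rw [h'] at this
        exact this
      · exfalso
        have : b ∈ {s : R | a * s ∈ P} := hab
        rw [h'] at this
        exact hnab this
  tfae_finish
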